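/- Let T be a commutative cancellative monoid and H a submonoid of T such that every element of T divides some element of H within T (i.e., T is an overmonoid of H in the sense that T is contained in the quotient group of H). If H ⊆ T is inert, then T = H·T^×. -/
import Mathlib


/-- The extension `H ⊆ T` is inert. -/
def Inert {T : Type*} [CancelCommMonoid T] (H : Submonoid T) : Prop :=
  ∀ x y : T, x * y ∈ H → ∃ ε : Tˣ, x * ε ∈ H ∧ y * ↑ε⁻¹ ∈ H

theorem stmt1 {T : Type*} [CancelCommMonoid T] (H : Submonoid T)
    (hover : ∀ y : T, ∃ x ∈ H, x * y ∈ H) (hinert : Inert H) :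
    ∀ t : T, ∃ h ∈ H, ∃ ε : Tˣ, t = h * ε := by
  intro t
  obtain ⟨x, hx, hxt⟩ := hover t
  obtain ⟨ε, hxe, hte⟩ := hinert x t hxt
  exact ⟨t * ↑ε⁻¹, hte, ε, by rw [mul_assoc, Units.inv_mul, mul_one]⟩
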